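/- Consider a min-cost flow instance whose edge costs c_e ∈ [0,1] are independent random variables, each having a probability density function bounded from above by φ. Suppose there exist at least two feasible integer flows, let f* denote a feasible integer flow of minimum cost, and let δ = min{c·f̂ − c·f* : f̂ a feasible integer flow, f̂ ≠ f*}. Then for every ε ≥ 0, the probability that δ ≤ ε is at most 2εφm. -/

import Mathlib

open MeasureTheory

/-- A feasible integer flow: capacity constraints and budget (flow conservation)
constraints. -/
def IsFlow {V E : Type} [Fintype E] [DecidableEq V]
    (src tgt : E → V) (cap : E → ℕ) (bdg : V → ℤ) (f : E → ℤ) : Prop :=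
  (∀ e, 0 ≤ f e ∧ f e ≤ (cap e : ℤ)) ∧
  ∀ v, ((∑ e, if src e = v then f e else 0) - (∑ e, if tgt e = v then f e else 0)) = bdg v

/-- The cost `c · f` of an integer flow. -/
noncomputable def flowCost {E : Type} [Fintype E] (c : E → ℝ) (f : E → ℤ) : ℝ :=
  ∑ e, c e * (f e : ℝ)

set_option linter.unusedSectionVars false
set_option linter.unusedTactic false
set_option linter.unreachableTactic false
set_option maxHeartbeats 1000000

section Aux

variable {V E : Type} [Fintype V] [Fintype E] [DecidableEq V]

/-- A circulation: node balance is zero at every node. -/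
def IsCirc (src tgt : E → V) (D : E → ℤ) : Prop :=
  ∀ v, ((∑ e, if src e = v then D e else 0) - (∑ e, if tgt e = v then D e else 0)) = 0

/-- `C` is a conformal sub-unit vector of `D`. -/
def Conf {E : Type} (D C : E → ℤ) : Prop :=
  ∀ e, C e = 0 ∨ (C e = 1 ∧ 1 ≤ D e) ∨ (C e = -1 ∧ D e ≤ -1)

variable {src tgt : E → V} {cap : E → ℕ} {bdg : V → ℤ}

lemma flowCost_add (c : E → ℝ) (f C : E → ℤ) :
    flowCost c (f + C) = flowCost c f + flowCost c C := by
  simp only [flowCost, Pi.add_apply, Int.cast_add, mul_add, Finset.sum_add_distrib]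

lemma flowCost_sub (c : E → ℝ) (f h : E → ℤ) :
    flowCost c (h - f) = flowCost c h - flowCost c f := by
  simp only [flowCost, Pi.sub_apply, Int.cast_sub, mul_sub, Finset.sum_sub_distrib]

lemma flowCost_zero (c : E → ℝ) : flowCost c 0 = 0 := by simp [flowCost]

lemma flowCost_list_sum (c : E → ℝ) (L : List (E → ℤ)) :
    flowCost c L.sum = (L.map (flowCost c)).sum := by
  induction L with
  | nil => simp [flowCost_zero]
  | cons a l ih => simp only [List.sum_cons, List.map_cons, flowCost_add, ih]

lemma isCirc_sub (f h : E → ℤ) (hf : IsFlow src tgt cap bdg f)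
    (hh : IsFlow src tgt cap bdg h) : IsCirc src tgt (h - f) := by
  intro v
  have h1 := hf.2 v
  have h2 := hh.2 v
  simp only [Pi.sub_apply]
  have e1 : ∀ e, (if src e = v then h e - f e else 0) =
      (if src e = v then h e else 0) - (if src e = v then f e else 0) := by
    intro e; split <;> simp
  have e2 : ∀ e, (if tgt e = v then h e - f e else 0) =
      (if tgt e = v then h e else 0) - (if tgt e = v then f e else 0) := by
    intro e; split <;> simp
  simp only [e1, e2, Finset.sum_sub_distrib]
  linarith

lemma isCirc_neg (C : E → ℤ) (hC : IsCirc src tgt C) : IsCirc src tgt (-C) := by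
  intro v
  have h2 := hC v
  simp only [Pi.neg_apply]
  have e1 : ∀ (st : E → V) e, (if st e = v then -C e else 0) =
      -(if st e = v then C e else 0) := by
    intro st e; split <;> simp
  simp only [e1, Finset.sum_neg_distrib]
  linarith

lemma budget_add (f C : E → ℤ)
    (hf : ∀ v, ((∑ e, if src e = v then f e else 0) - (∑ e, if tgt e = v then f e else 0)) = bdg v)
    (hC : IsCirc src tgt C) :
    ∀ v, ((∑ e, if src e = v then (f + C) e else 0)
        - (∑ e, if tgt e = v then (f + C) e else 0)) = bdg v := by
  intro v
  have h1 := hf v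
  have h2 := hC v
  simp only [Pi.add_apply]
  have e1 : ∀ (st : E → V) e, (if st e = v then f e + C e else 0) =
      (if st e = v then f e else 0) + (if st e = v then C e else 0) := by
    intro st e; split <;> simp
  simp only [e1, Finset.sum_add_distrib]
  linarith

lemma isFlow_add_circ (f C : E → ℤ) (hf : IsFlow src tgt cap bdg f)
    (hC : IsCirc src tgt C) (hcap : ∀ e, 0 ≤ f e + C e ∧ f e + C e ≤ (cap e : ℤ)) :
    IsFlow src tgt cap bdg (f + C) :=
  ⟨fun e => hcap e, budget_add f C hf.2 hC⟩

lemma ternary_ne_zero {E : Type} [Fintype E] (w : E → ℝ)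
    (hw : ∀ e, w e = 3 ^ ((Fintype.equivFin E e : ℕ)))
    (C : E → ℤ) (hC : ∀ e, C e = 0 ∨ C e = 1 ∨ C e = -1) (hne : C ≠ 0) :
    flowCost w C ≠ 0 := by
  classical
  set rk : E → ℕ := fun e => (Fintype.equivFin E e : ℕ) with hrk
  have hrkinj : Function.Injective rk := fun a b hab => by
    have := Fin.ext hab
    exact (Fintype.equivFin E).injective (by exact this)
  set s : Finset E := Finset.univ.filter (fun e => C e ≠ 0) with hs
  have hsne : s.Nonempty := by
    rcases Function.ne_iff.mp hne with ⟨e, he⟩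
    exact ⟨e, by simp only [hs, Finset.mem_filter, Finset.mem_univ, true_and]; simpa using he⟩
  obtain ⟨e0, he0s, he0max⟩ := s.exists_max_image rk hsne
  have hsum : flowCost w C = ∑ e ∈ s, w e * (C e : ℝ) := by
    rw [flowCost]
    refine (Finset.sum_subset (Finset.subset_univ s) ?_).symm
    intro e _ hes
    have : C e = 0 := by by_contra h; exact hes (by simp [hs, h])
    simp [this]
  have habs1 : |C e0| = 1 := by
    rcases hC e0 with h | h | h
    · exact absurd h (by simpa [hs] using he0s)
    · simp [h]
    · simp [h]
  have hwpos : ∀ e, w e = 3 ^ rk e := hw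
  -- bound on the rest
  have hrest : |∑ e ∈ s.erase e0, w e * (C e : ℝ)| < 3 ^ rk e0 := by
    calc |∑ e ∈ s.erase e0, w e * (C e : ℝ)| ≤ ∑ e ∈ s.erase e0, |w e * (C e : ℝ)| :=
          Finset.abs_sum_le_sum_abs _ _
      _ ≤ ∑ e ∈ s.erase e0, (3:ℝ) ^ rk e := by
          refine Finset.sum_le_sum fun e he => ?_
          have h1 : |(C e : ℝ)| ≤ 1 := by
            rcases hC e with h | h | h <;> simp [h]
          rw [abs_mul]
          calc |w e| * |(C e : ℝ)| ≤ |w e| * 1 := by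
                exact mul_le_mul_of_nonneg_left h1 (abs_nonneg _)
            _ = (3:ℝ) ^ rk e := by rw [mul_one, hwpos, abs_of_pos (by positivity)]
      _ = ∑ j ∈ (s.erase e0).image rk, (3:ℝ) ^ j := by
          rw [Finset.sum_image (fun a _ b _ hab => hrkinj hab)]
      _ ≤ ∑ j ∈ Finset.range (rk e0), (3:ℝ) ^ j := by
          refine Finset.sum_le_sum_of_subset_of_nonneg ?_ (fun j _ _ => by positivity)
          intro j hj
          simp only [Finset.mem_image] at hj
          obtain ⟨e, he, rfl⟩ := hj
          have hmem := Finset.mem_of_mem_erase he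
          have hne' : e ≠ e0 := Finset.ne_of_mem_erase he
          have : rk e ≤ rk e0 := he0max e hmem
          exact Finset.mem_range.mpr (lt_of_le_of_ne this (fun h => hne' (hrkinj h)))
      _ = ((3:ℝ) ^ rk e0 - 1) / (3 - 1) := by
          rw [geom_sum_eq (by norm_num : (3:ℝ) ≠ 1) _]
      _ < 3 ^ rk e0 := by
          have : (0:ℝ) < 3 ^ rk e0 := by positivity
          linarith
  have hsplit : ∑ e ∈ s, w e * (C e : ℝ) =
      w e0 * (C e0 : ℝ) + ∑ e ∈ s.erase e0, w e * (C e : ℝ) :=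
    (Finset.add_sum_erase s _ he0s).symm
  have hmain : |w e0 * (C e0 : ℝ)| = 3 ^ rk e0 := by
    rw [abs_mul, hwpos, abs_of_pos (show (0:ℝ) < 3 ^ rk e0 by positivity)]
    have : |(C e0 : ℝ)| = 1 := by
      rw [← Int.cast_abs, habs1]; norm_num
    rw [this, mul_one]
  rw [hsum, hsplit]
  intro hcontra
  have : w e0 * (C e0 : ℝ) = -∑ e ∈ s.erase e0, w e * (C e : ℝ) := by linarith
  rw [this, abs_neg] at hmain
  rw [hmain] at hrest
  exact lt_irrefl _ hrest


lemma isCirc_sub_circ (D C : E → ℤ) (hD : IsCirc src tgt D) (hC : IsCirc src tgt C) :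
    IsCirc src tgt (D - C) := by
  intro v
  have h1 := hD v
  have h2 := hC v
  simp only [Pi.sub_apply]
  have e1 : ∀ e, (if src e = v then D e - C e else 0) =
      (if src e = v then D e else 0) - (if src e = v then C e else 0) := by
    intro e; split <;> simp
  have e2 : ∀ e, (if tgt e = v then D e - C e else 0) =
      (if tgt e = v then D e else 0) - (if tgt e = v then C e else 0) := by
    intro e; split <;> simp
  simp only [e1, e2, Finset.sum_sub_distrib]
  linarith

private lemma tele (F : ℕ → ℤ) (m n : ℕ) (h : m ≤ n) :
    ∑ k ∈ Finset.Ico m n, (F k - F (k + 1)) = F m - F n := by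
  induction n, h using Nat.le_induction with
  | base => simp
  | succ n hmn ih => rw [Finset.sum_Ico_succ_top hmn, ih]; ring

lemma exists_cycle (D : E → ℤ) (hD : IsCirc src tgt D) (hne : D ≠ 0) :
    ∃ C : E → ℤ, IsCirc src tgt C ∧ C ≠ 0 ∧ Conf D C := by
  classical
  -- arcs
  let A : Type := {p : E × Bool // if p.2 then 0 < D p.1 else D p.1 < 0}
  let tl : A → V := fun a => if a.1.2 then src a.1.1 else tgt a.1.1
  let hd : A → V := fun a => if a.1.2 then tgt a.1.1 else src a.1.1
  -- a starting arc
  obtain ⟨e₀, he₀⟩ : ∃ e, D e ≠ 0 := Function.ne_iff.mp hne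
  have ha₀ : ∃ a : A, True := by
    rcases lt_or_gt_of_ne he₀ with h | h
    · exact ⟨⟨(e₀, false), by simpa using h⟩, trivial⟩
    · exact ⟨⟨(e₀, true), by simpa using h⟩, trivial⟩
  obtain ⟨a₀, -⟩ := ha₀
  -- step
  have step : ∀ a : A, ∃ b : A, tl b = hd a := by
    intro a
    set v := hd a with hv
    by_contra hstep
    push_neg at hstep
    have hout : ∀ e, (src e = v → D e ≤ 0) ∧ (tgt e = v → 0 ≤ D e) := by
      intro e
      constructor
      · intro hsrc
        by_contra hpos
        push_neg at hpos
        exact absurd (by simp [tl, hsrc] : tl ⟨(e, true), by simpa using hpos⟩ = v)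
          (hstep ⟨(e, true), by simpa using hpos⟩)
      · intro htgt
        by_contra hneg
        push_neg at hneg
        exact absurd (by simp [tl, htgt] : tl ⟨(e, false), by simpa using hneg⟩ = v)
          (hstep ⟨(e, false), by simpa using hneg⟩)
    have hcons := hD v
    by_cases hb : a.1.2 = true
    · -- arc forward: hd = tgt a.1.1, D > 0
      have hDa : 0 < D a.1.1 := by have := a.2; rw [hb] at this; simpa using this
      have htgt : tgt a.1.1 = v := by simp [hv, hd, hb]
      have hS1 : (∑ e, if src e = v then D e else 0) ≤ 0 := by
        refine Finset.sum_nonpos fun e _ => ?_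
        split
        · exact (hout e).1 ‹_›
        · exact le_refl 0
      have hS2 : (0:ℤ) < (∑ e, if tgt e = v then D e else 0) := by
        have := Finset.sum_lt_sum (s := Finset.univ)
          (f := fun _ : E => (0:ℤ)) (g := fun e => if tgt e = v then D e else 0)
          (fun e _ => by split; exacts [(hout e).2 ‹_›, le_refl 0])
          ⟨a.1.1, Finset.mem_univ _, by simp [htgt, hDa]⟩
        simpa using this
      omega
    · -- arc backward: hd = src a.1.1, D < 0
      have hb' : a.1.2 = false := by simpa using hb
      have hDa : D a.1.1 < 0 := by have := a.2; rw [hb'] at this; simpa using this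
      have hsrc : src a.1.1 = v := by simp [hv, hd, hb']
      have hS1 : (∑ e, if src e = v then D e else 0) < 0 := by
        have := Finset.sum_lt_sum (s := Finset.univ)
          (f := fun e => if src e = v then D e else 0) (g := fun _ : E => (0:ℤ))
          (fun e _ => by split; exacts [(hout e).1 ‹_›, le_refl 0])
          ⟨a.1.1, Finset.mem_univ _, by simp [hsrc, hDa]⟩
        simpa using this
      have hS2 : (0:ℤ) ≤ (∑ e, if tgt e = v then D e else 0) := by
        refine Finset.sum_nonneg fun e _ => ?_
        split
        · exact (hout e).2 ‹_›
        · exact le_refl 0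
      omega
  -- the walk
  let stp : A → A := fun a => Classical.choose (step a)
  have hstp : ∀ a, tl (stp a) = hd a := fun a => Classical.choose_spec (step a)
  let wk : ℕ → A := fun n => Nat.rec a₀ (fun _ a => stp a) n
  let vs : ℕ → V := fun n => tl (wk n)
  have hvs : ∀ n, hd (wk n) = vs (n + 1) := fun n => (hstp (wk n)).symm
  obtain ⟨i, j, hij, hveq⟩ := Finite.exists_ne_map_eq_of_infinite vs
  have hex : ∃ m, ∃ i, i < m ∧ vs i = vs m := by
    rcases Nat.lt_or_ge i j with h | h
    · exact ⟨j, i, h, hveq⟩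
    · exact ⟨i, j, lt_of_le_of_ne h (Ne.symm hij), hveq.symm⟩
  let j₀ := Nat.find hex
  obtain ⟨i₀, hi₀lt, hi₀eq⟩ : ∃ i, i < j₀ ∧ vs i = vs j₀ := Nat.find_spec hex
  have hmin : ∀ k l, k < l → l < j₀ → vs k ≠ vs l := fun k l hkl hl hkv =>
    Nat.find_min hex hl ⟨k, hkl, hkv⟩
  let ed : ℕ → E := fun n => (wk n).1.1
  let sg : ℕ → ℤ := fun n => if (wk n).1.2 then 1 else -1
  have hedinj : ∀ k ∈ Finset.Ico i₀ j₀, ∀ l ∈ Finset.Ico i₀ j₀, ed k = ed l → k = l := by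
    intro k hk l hl hkl
    by_contra hne'
    have hbool : (wk k).1.2 = (wk l).1.2 := by
      have pk := (wk k).2
      have pl := (wk l).2
      rw [show (wk k).1.1 = ed k from rfl, hkl] at pk
      rw [show (wk l).1.1 = ed l from rfl] at pl
      by_contra hb
      have hx : (0 < D (ed l)) ∧ (D (ed l) < 0) := by
        rcases Bool.eq_false_or_eq_true (wk k).1.2 with h1 | h1 <;>
          rcases Bool.eq_false_or_eq_true (wk l).1.2 with h2 | h2
        · exact absurd (h1.trans h2.symm) hb
        · rw [h1] at pk; rw [h2] at pl
          simp only [if_true] at pk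
          simp only [Bool.false_eq_true, if_false] at pl
          exact ⟨pk, pl⟩
        · rw [h1] at pk; rw [h2] at pl
          simp only [Bool.false_eq_true, if_false] at pk
          simp only [if_true] at pl
          exact ⟨pl, pk⟩
        · exact absurd (h1.trans h2.symm) hb
      omega
    have hwkeq : wk k = wk l := Subtype.ext (Prod.ext hkl hbool)
    have hvseq : vs k = vs l := by simp only [vs, hwkeq]
    simp only [Finset.mem_Ico] at hk hl
    rcases Nat.lt_or_ge k l with h | h
    · exact hmin k l h hl.2 hvseq
    · exact hmin l k (lt_of_le_of_ne h (Ne.symm hne')) hk.2 hvseq.symm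
  have hsingle : ∀ k ∈ Finset.Ico i₀ j₀,
      (∑ m ∈ Finset.Ico i₀ j₀, if ed m = ed k then sg m else 0) = sg k := by
    intro k hk
    rw [Finset.sum_eq_single_of_mem k hk]
    · simp
    · intro l hl hlk
      rw [if_neg (fun h => hlk (hedinj l hl k hk h))]
  refine ⟨fun e => ∑ k ∈ Finset.Ico i₀ j₀, if ed k = e then sg k else 0, ?_, ?_, ?_⟩
  · -- circulation
    intro v
    have hsw : ∀ st : E → V, (∑ e, if st e = v then
        (∑ k ∈ Finset.Ico i₀ j₀, if ed k = e then sg k else 0) else 0) =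
        ∑ k ∈ Finset.Ico i₀ j₀, (if st (ed k) = v then sg k else 0) := by
      intro st
      have h1 : ∀ e : E, (if st e = v then
          (∑ k ∈ Finset.Ico i₀ j₀, if ed k = e then sg k else 0) else 0) =
          ∑ k ∈ Finset.Ico i₀ j₀, (if st e = v then (if ed k = e then sg k else 0) else 0) := by
        intro e; split
        · rfl
        · simp
      simp only [h1]
      rw [Finset.sum_comm]
      refine Finset.sum_congr rfl fun k _ => ?_
      rw [Finset.sum_eq_single (ed k)]
      · simp
      · intro e _ hek
        have hz : (if ed k = e then sg k else 0) = 0 := if_neg (fun h => hek h.symm)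
        rw [hz]
        split <;> rfl
      · intro h; exact absurd (Finset.mem_univ _) h
    rw [hsw src, hsw tgt, ← Finset.sum_sub_distrib]
    have hterm : ∀ k, ((if src (ed k) = v then sg k else 0) - (if tgt (ed k) = v then sg k else 0))
        = ((if vs k = v then (1:ℤ) else 0) - (if vs (k+1) = v then (1:ℤ) else 0)) := by
      intro k
      have hvk1 : vs (k+1) = hd (wk k) := (hvs k).symm
      rcases Bool.eq_false_or_eq_true (wk k).1.2 with hb | hb
      · have hsg : sg k = 1 := by simp [sg, hb]
        have h2 : vs k = src (ed k) := by
          show (if (wk k).1.2 = true then src (wk k).1.1 else tgt (wk k).1.1) = src (ed k)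
          rw [hb]; simp only [if_true]; rfl
        have h3 : vs (k+1) = tgt (ed k) := by
          rw [hvk1]
          show (if (wk k).1.2 = true then tgt (wk k).1.1 else src (wk k).1.1) = tgt (ed k)
          rw [hb]; simp only [if_true]; rfl
        rw [hsg, h2, h3]
        try (split_ifs <;> omega)
      · have hsg : sg k = -1 := by simp [sg, hb]
        have h2 : vs k = tgt (ed k) := by
          show (if (wk k).1.2 = true then src (wk k).1.1 else tgt (wk k).1.1) = tgt (ed k)
          rw [hb]; simp only [Bool.false_eq_true, if_false]; rfl
        have h3 : vs (k+1) = src (ed k) := by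
          rw [hvk1]
          show (if (wk k).1.2 = true then tgt (wk k).1.1 else src (wk k).1.1) = src (ed k)
          rw [hb]; simp only [Bool.false_eq_true, if_false]; rfl
        rw [hsg, h2, h3]
        try (split_ifs <;> omega)
    simp only [hterm]
    rw [tele (fun k => if vs k = v then (1:ℤ) else 0) i₀ j₀ (le_of_lt hi₀lt)]
    rw [hi₀eq]
    ring
  · -- nonzero
    intro hC0
    have := congrFun hC0 (ed i₀)
    rw [hsingle i₀ (Finset.mem_Ico.mpr ⟨le_refl _, hi₀lt⟩)] at this
    simp only [Pi.zero_apply, sg] at this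
    split at this <;> omega
  · -- conformal
    intro e
    by_cases he : ∃ k ∈ Finset.Ico i₀ j₀, ed k = e
    · obtain ⟨k, hk, rfl⟩ := he
      dsimp only
      rw [hsingle k hk]
      have pk := (wk k).2
      rw [show (wk k).1.1 = ed k from rfl] at pk
      rcases Bool.eq_false_or_eq_true (wk k).1.2 with hb | hb
      · have hsg : sg k = 1 := by simp [sg, hb]
        rw [hb] at pk
        simp only [if_true] at pk
        exact Or.inr (Or.inl ⟨hsg, by omega⟩)
      · have hsg : sg k = -1 := by simp [sg, hb]
        rw [hb] at pk
        simp only [Bool.false_eq_true, if_false] at pk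
        exact Or.inr (Or.inr ⟨hsg, by omega⟩)
    · push_neg at he
      left
      exact Finset.sum_eq_zero fun k hk => if_neg (he k hk)

lemma decomp_aux : ∀ (n : ℕ) (D : E → ℤ), (∑ e, (D e).natAbs) ≤ n → IsCirc src tgt D →
    ∃ L : List (E → ℤ), L.sum = D ∧ ∀ C ∈ L, IsCirc src tgt C ∧ C ≠ 0 ∧ Conf D C := by
  intro n
  induction n with
  | zero =>
    intro D hn _
    have hz : ∑ e, (D e).natAbs = 0 := Nat.le_zero.mp hn
    have : D = 0 := by
      funext e
      have he := (Finset.sum_eq_zero_iff.mp hz) e (Finset.mem_univ e)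
      simpa using Int.natAbs_eq_zero.mp he
    exact ⟨[], by simp [this], by simp⟩
  | succ n ih =>
    intro D hn hD
    by_cases h0 : D = 0
    · exact ⟨[], by simp [h0], by simp⟩
    · obtain ⟨C, hCc, hCne, hCconf⟩ := exists_cycle D hD h0
      set D' : E → ℤ := D - C with hD'def
      have hD'c : IsCirc src tgt D' := isCirc_sub_circ D C hD hCc
      -- measure decreases
      have hpt : ∀ e, (D' e).natAbs ≤ (D e).natAbs := by
        intro e
        rcases hCconf e with h | ⟨h1, h2⟩ | ⟨h1, h2⟩ <;>
          simp only [hD'def, Pi.sub_apply] <;> omega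
      obtain ⟨e0, he0⟩ : ∃ e, C e ≠ 0 := Function.ne_iff.mp hCne
      have hstrict : (D' e0).natAbs < (D e0).natAbs := by
        rcases hCconf e0 with h | ⟨h1, h2⟩ | ⟨h1, h2⟩
        · exact absurd h he0
        · simp only [hD'def, Pi.sub_apply]; omega
        · simp only [hD'def, Pi.sub_apply]; omega
      have hsum' : (∑ e, (D' e).natAbs) < ∑ e, (D e).natAbs := by
        exact Finset.sum_lt_sum (fun e _ => hpt e) ⟨e0, Finset.mem_univ e0, hstrict⟩
      have hle : (∑ e, (D' e).natAbs) ≤ n := by omega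
      obtain ⟨L', hL'sum, hL'⟩ := ih D' hle hD'c
      refine ⟨C :: L', ?_, ?_⟩
      · simp only [List.sum_cons, hL'sum, hD'def]; abel
      · intro C' hC'
        rcases List.mem_cons.mp hC' with rfl | hC'
        · exact ⟨hCc, hCne, hCconf⟩
        · obtain ⟨hc1, hc2, hc3⟩ := hL' C' hC'
          refine ⟨hc1, hc2, fun e => ?_⟩
          rcases hc3 e with h | ⟨h1, h2⟩ | ⟨h1, h2⟩
          · exact Or.inl h
          · refine Or.inr (Or.inl ⟨h1, ?_⟩)
            rcases hCconf e with g | ⟨g1, g2⟩ | ⟨g1, g2⟩ <;>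
              simp only [hD'def, Pi.sub_apply] at h2 <;> omega
          · refine Or.inr (Or.inr ⟨h1, ?_⟩)
            rcases hCconf e with g | ⟨g1, g2⟩ | ⟨g1, g2⟩ <;>
              simp only [hD'def, Pi.sub_apply] at h2 <;> omega

lemma covering (c : E → ℝ) (ε : ℝ) (hε : 0 ≤ ε)
    (htwo : ∃ f₁ f₂ : E → ℤ, IsFlow src tgt cap bdg f₁ ∧ IsFlow src tgt cap bdg f₂ ∧ f₁ ≠ f₂)
    (hmem : ∃ fstar fhat : E → ℤ,
        IsFlow src tgt cap bdg fstar ∧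
        (∀ f, IsFlow src tgt cap bdg f → flowCost c fstar ≤ flowCost c f) ∧
        IsFlow src tgt cap bdg fhat ∧ fhat ≠ fstar ∧
        flowCost c fhat - flowCost c fstar ≤ ε) :
    ∃ (e : E) (k₀ k₁ : ℤ), (k₁ = k₀ + 1 ∨ k₁ = k₀ - 1) ∧
      ((k₀ = 0 ∧ k₁ = 1) ∨ (k₀ = (cap e : ℤ) ∧ k₁ = (cap e : ℤ) - 1)) ∧
      ∃ f g' : E → ℤ, IsFlow src tgt cap bdg f ∧ IsFlow src tgt cap bdg g' ∧
        (∀ h, IsFlow src tgt cap bdg h → flowCost c f ≤ flowCost c h) ∧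
        f e = k₀ ∧ g' e = k₁ ∧ flowCost c g' - flowCost c f ≤ ε := by
  classical
  set F : Finset (E → ℤ) :=
    (Fintype.piFinset fun e => Finset.Icc 0 (cap e : ℤ)).filter (IsFlow src tgt cap bdg) with hF
  have hmemF : ∀ f, f ∈ F ↔ IsFlow src tgt cap bdg f := by
    intro f
    simp only [hF, Finset.mem_filter, Fintype.mem_piFinset, Finset.mem_Icc]
    exact ⟨fun h => h.2, fun h => ⟨fun e => h.1 e, h⟩⟩
  obtain ⟨f₀, fh₀, hf₀, hopt₀, hfh₀, hne₀, hcost₀⟩ := hmem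
  set w : E → ℝ := fun e => 3 ^ ((Fintype.equivFin E e : ℕ)) with hw
  set O : Finset (E → ℤ) := F.filter (fun f => ∀ h ∈ F, flowCost c f ≤ flowCost c h) with hO
  have hf₀O : f₀ ∈ O := by
    rw [hO, Finset.mem_filter]
    exact ⟨(hmemF f₀).2 hf₀, fun h hh => hopt₀ h ((hmemF h).1 hh)⟩
  obtain ⟨fs, hfsO, hfsmin⟩ := O.exists_min_image (flowCost w) ⟨f₀, hf₀O⟩
  have hfsF : fs ∈ F := (Finset.mem_filter.mp hfsO).1
  have hfsflow : IsFlow src tgt cap bdg fs := (hmemF fs).1 hfsF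
  have hfsopt : ∀ h, IsFlow src tgt cap bdg h → flowCost c fs ≤ flowCost c h :=
    fun h hh => (Finset.mem_filter.mp hfsO).2 h ((hmemF h).2 hh)
  have hf₀cost : flowCost c fs = flowCost c f₀ :=
    le_antisymm (hfsopt f₀ hf₀) (hopt₀ fs hfsflow)
  obtain ⟨hh, hhflow, hhne, hhcost⟩ :
      ∃ hh, IsFlow src tgt cap bdg hh ∧ hh ≠ fs ∧ flowCost c hh - flowCost c fs ≤ ε := by
    by_cases heq : fh₀ = fs
    · refine ⟨f₀, hf₀, fun hcon => hne₀ (heq.trans hcon.symm), ?_⟩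
      rw [hf₀cost]; linarith
    · exact ⟨fh₀, hfh₀, heq, by rw [hf₀cost]; linarith⟩
  set D : E → ℤ := hh - fs with hD
  have hDcirc : IsCirc src tgt D := isCirc_sub fs hh hfsflow hhflow
  have hDne : D ≠ 0 := sub_ne_zero_of_ne hhne
  have hDcost0 : 0 ≤ flowCost c D := by
    rw [hD, flowCost_sub]
    have := hfsopt hh hhflow
    linarith
  have hDcostε : flowCost c D ≤ ε := by rw [hD, flowCost_sub]; exact hhcost
  obtain ⟨L, hLsum, hL⟩ := decomp_aux (∑ e, (D e).natAbs) D le_rfl hDcirc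
  have hLne : L ≠ [] := by
    rintro rfl
    rw [List.sum_nil] at hLsum
    exact hDne hLsum.symm
  obtain ⟨C, L', rfl⟩ := List.exists_cons_of_ne_nil hLne
  have hCmem : C ∈ C :: L' := List.mem_cons_self
  have hfeas : ∀ C' ∈ C :: L', IsFlow src tgt cap bdg (fs + C') := by
    intro C' hC'
    obtain ⟨hcirc, hne, hconf⟩ := hL C' hC'
    refine isFlow_add_circ fs C' hfsflow hcirc fun e => ?_
    have hb1 := hfsflow.1 e
    have hb2 := hhflow.1 e
    have hDe : D e = hh e - fs e := rfl
    rcases hconf e with h0 | ⟨h1, h2⟩ | ⟨h1, h2⟩ <;> rw [‹C' e = _›] <;> omega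
  have hcostnn : ∀ C' ∈ C :: L', 0 ≤ flowCost c C' := by
    intro C' hC'
    have h1 := hfsopt _ (hfeas C' hC')
    rw [flowCost_add] at h1
    linarith
  have hCcost0 : 0 ≤ flowCost c C := hcostnn C hCmem
  have hCcostε : flowCost c C ≤ ε := by
    have hsum := flowCost_list_sum c (C :: L')
    rw [hLsum] at hsum
    simp only [List.map_cons, List.sum_cons] at hsum
    have hrest : 0 ≤ (L'.map (flowCost c)).sum := by
      apply List.sum_nonneg
      intro x hx
      obtain ⟨C', hC', rfl⟩ := List.mem_map.mp hx
      exact hcostnn C' (List.mem_cons_of_mem _ hC')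
    linarith
  have hCconf : Conf D C := (hL C hCmem).2.2
  have hCcirc : IsCirc src tgt C := (hL C hCmem).1
  have hCne : C ≠ 0 := (hL C hCmem).2.1
  -- fs - C is not a flow
  have hbudget : ∀ v, ((∑ e, if src e = v then (fs - C) e else 0)
      - (∑ e, if tgt e = v then (fs - C) e else 0)) = bdg v := by
    have : fs - C = fs + (-C) := by funext e; simp [sub_eq_add_neg]
    rw [this]
    exact budget_add fs (-C) hfsflow.2 (isCirc_neg C hCcirc)
  have hinfeas : ¬ IsFlow src tgt cap bdg (fs - C) := by
    intro hcontra
    rcases lt_or_eq_of_le hCcost0 with hpos | hzero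
    · have h1 := hfsopt _ hcontra
      have h2 : flowCost c (fs - C) = flowCost c fs - flowCost c C := flowCost_sub c C fs
      linarith
    · have hCw : flowCost w C ≠ 0 := by
        refine ternary_ne_zero w (fun e => rfl) C (fun e => ?_) hCne
        rcases hCconf e with h | ⟨h1, _⟩ | ⟨h1, _⟩
        · exact Or.inl h
        · exact Or.inr (Or.inl h1)
        · exact Or.inr (Or.inr h1)
      have hCzero : flowCost c C = 0 := hzero.symm
      rcases lt_or_gt_of_ne hCw with hneg | hpos
      · -- fs + C is optimal with smaller secondary weight
        have hflowp : IsFlow src tgt cap bdg (fs + C) := hfeas C hCmem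
        have hcosteq : flowCost c (fs + C) = flowCost c fs := by
          rw [flowCost_add, hCzero, add_zero]
        have hmemO : fs + C ∈ O := by
          rw [hO, Finset.mem_filter]
          refine ⟨(hmemF _).2 hflowp, fun h hhF => ?_⟩
          rw [hcosteq]
          exact hfsopt h ((hmemF h).1 hhF)
        have := hfsmin _ hmemO
        rw [flowCost_add w fs C] at this
        linarith
      · -- fs - C is optimal with smaller secondary weight
        have hcosteq : flowCost c (fs - C) = flowCost c fs := by
          rw [flowCost_sub c C fs, hCzero, sub_zero]
        have hmemO : fs - C ∈ O := by
          rw [hO, Finset.mem_filter]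
          refine ⟨(hmemF _).2 hcontra, fun h hhF => ?_⟩
          rw [hcosteq]
          exact hfsopt h ((hmemF h).1 hhF)
        have := hfsmin _ hmemO
        rw [flowCost_sub w C fs] at this
        linarith
  -- find violated capacity bound
  have hcapbad : ¬ (∀ e, 0 ≤ (fs - C) e ∧ (fs - C) e ≤ (cap e : ℤ)) :=
    fun hc => hinfeas ⟨hc, hbudget⟩
  push_neg at hcapbad
  obtain ⟨e, hbad⟩ := hcapbad
  have hb1 := hfsflow.1 e
  have hsubC : (fs - C) e = fs e - C e := rfl
  have hdiffC : flowCost c (fs + C) - flowCost c fs ≤ ε := by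
    rw [flowCost_add]; linarith
  have haddC : (fs + C) e = fs e + C e := rfl
  rcases hCconf e with h0 | ⟨h1, h2⟩ | ⟨h1, h2⟩
  · exfalso
    have h3 : (fs - C) e = fs e := by rw [hsubC, h0, sub_zero]
    have h4 : (0:ℤ) ≤ (fs - C) e := by omega
    have h5 := hbad h4
    omega
  · -- C e = 1, so fs e = 0
    have hfse : fs e = 0 := by
      by_contra h
      have h4 : (0:ℤ) ≤ (fs - C) e := by rw [hsubC, h1]; omega
      have h5 := hbad h4
      rw [hsubC, h1] at h5
      omega
    refine ⟨e, 0, 1, Or.inl (by ring), Or.inl ⟨rfl, rfl⟩, fs, fs + C,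
      hfsflow, hfeas C hCmem, hfsopt, hfse, ?_, hdiffC⟩
    rw [haddC, hfse, h1]
    ring
  · -- C e = -1, so fs e = cap e
    have hfse : fs e = (cap e : ℤ) := by
      by_contra h
      have h4 : (0:ℤ) ≤ (fs - C) e := by rw [hsubC, h1]; omega
      have h5 := hbad h4
      rw [hsubC, h1] at h5
      omega
    refine ⟨e, (cap e : ℤ), (cap e : ℤ) - 1, Or.inr rfl, Or.inr ⟨rfl, rfl⟩, fs, fs + C,
      hfsflow, hfeas C hCmem, hfsopt, hfse, ?_, hdiffC⟩
    rw [haddC, hfse, h1]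
    ring

end Aux

section MeasureAux

lemma pi_slab_bound {E : Type} [Fintype E] (μ : E → Measure ℝ)
    [∀ e, IsProbabilityMeasure (μ e)]
    (φ ε : ℝ) (hφ : 0 ≤ φ) (hε : 0 ≤ ε)
    (hμ : ∀ (e : E) (a b : ℝ), μ e (Set.Icc a b) ≤ ENNReal.ofReal φ * volume (Set.Icc a b))
    (e : E) (α : (E → ℝ) → ℝ) (hα : Measurable α)
    (hα' : ∀ c c' : E → ℝ, (∀ i, i ≠ e → c i = c' i) → α c = α c')
    (S : Set (E → ℝ)) (hS : ∀ c ∈ S, c e ∈ Set.Icc (α c) (α c + ε)) :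
    Measure.pi μ S ≤ ENNReal.ofReal (φ * ε) := by
  classical
  set p : E → Prop := fun i => i = e with hp
  haveI : DecidablePred p := fun i => by rw [hp]; infer_instance
  haveI : Unique {i // p i} := ⟨⟨⟨e, rfl⟩⟩, fun a => Subtype.ext a.2⟩
  letI : Fintype (Subtype p) := Subtype.fintype p
  set τ := MeasurableEquiv.piEquivPiSubtypeProd (fun _ : E => ℝ) p with hτ
  have hmp := measurePreserving_piEquivPiSubtypeProd μ p
  set β : ({i // ¬ p i} → ℝ) → ℝ :=
    fun y => α (fun i => if h : p i then 0 else y ⟨i, h⟩) with hβ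
  have hβmeas : Measurable β := by
    apply hα.comp
    apply measurable_pi_lambda
    intro i
    by_cases h : p i
    · simp only [dif_pos h]; exact measurable_const
    · simp only [dif_neg h]; exact measurable_pi_apply _
  have hβα : ∀ c : E → ℝ, β ((τ c).2) = α c := by
    intro c
    refine hα' _ _ fun i hi => ?_
    have hpi : ¬ p i := hi
    simp only [dif_neg hpi]
    rfl
  set S' : Set (({i // p i} → ℝ) × ({i // ¬ p i} → ℝ)) :=
    {q | q.1 ⟨e, rfl⟩ ∈ Set.Icc (β q.2) (β q.2 + ε)} with hS'
  have hS'meas : MeasurableSet S' := by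
    have h1 : Measurable fun q : (({i // p i} → ℝ) × ({i // ¬ p i} → ℝ)) => q.1 ⟨e, rfl⟩ :=
      (measurable_pi_apply _).comp measurable_fst
    have h2 : Measurable fun q : (({i // p i} → ℝ) × ({i // ¬ p i} → ℝ)) => β q.2 :=
      hβmeas.comp measurable_snd
    exact (measurableSet_le h2 h1).inter (measurableSet_le h1 (h2.add measurable_const))
  have hsub : S ⊆ τ ⁻¹' S' := by
    intro c hc
    have h1 : (τ c).1 ⟨e, rfl⟩ = c e := rfl
    simp only [Set.mem_preimage, hS', Set.mem_setOf_eq, h1, hβα c]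
    exact hS c hc
  have key := hmp.measure_preimage hS'meas.nullMeasurableSet
  calc Measure.pi μ S ≤ Measure.pi μ (τ ⁻¹' S') := measure_mono hsub
    _ ≤ ENNReal.ofReal (φ * ε) := by
        rw [show (⇑τ ⁻¹' S') = (⇑(MeasurableEquiv.piEquivPiSubtypeProd (fun _ : E => ℝ) p) ⁻¹' S') from rfl,
          key, Measure.prod_apply_symm hS'meas]
        have hbnd : ∀ y : {i // ¬ p i} → ℝ,
            (Measure.pi fun i : Subtype p => μ ↑i) ((fun x => (x, y)) ⁻¹' S') ≤
            ENNReal.ofReal (φ * ε) := by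
          intro y
          have hset2 : ((fun x => (x, y)) ⁻¹' S') =
              Set.pi Set.univ (fun _ : Subtype p => Set.Icc (β y) (β y + ε)) := by
            ext x
            constructor
            · intro hx i _
              have : i = ⟨e, rfl⟩ := Subtype.ext i.2
              rw [this]
              exact hx
            · intro hx
              exact hx ⟨e, rfl⟩ (Set.mem_univ _)
          rw [hset2, Measure.pi_pi, Finset.univ_unique, Finset.prod_singleton]
          have hco : (↑(default : Subtype p)) = e := (default : Subtype p).2
          rw [hco]
          calc μ e (Set.Icc (β y) (β y + ε)) ≤
                ENNReal.ofReal φ * volume (Set.Icc (β y) (β y + ε)) := hμ e _ _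
            _ = ENNReal.ofReal (φ * ε) := by
                rw [Real.volume_Icc, show β y + ε - β y = ε by ring, ← ENNReal.ofReal_mul hφ]
        exact le_trans (lintegral_mono fun y => hbnd y)
          (by rw [lintegral_const, measure_univ, mul_one])

end MeasureAux

theorem min_cost_flow_isolation
    {V E : Type} [Fintype V] [Fintype E] [DecidableEq V]
    (src tgt : E → V) (cap : E → ℕ) (bdg : V → ℤ)
    (φ ε : ℝ) (hε : 0 ≤ ε)
    (g : E → ℝ → ENNReal)
    (hgmeas : ∀ e, Measurable (g e))
    (hgbound : ∀ e x, g e x ≤ ENNReal.ofReal φ)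
    (hgsupp : ∀ e x, x ∉ Set.Icc (0 : ℝ) 1 → g e x = 0)
    (hgprob : ∀ e, IsProbabilityMeasure ((volume : Measure ℝ).withDensity (g e)))
    (htwo : ∃ f₁ f₂ : E → ℤ, IsFlow src tgt cap bdg f₁ ∧ IsFlow src tgt cap bdg f₂ ∧ f₁ ≠ f₂) :
    Measure.pi (fun e : E => (volume : Measure ℝ).withDensity (g e))
      {c : E → ℝ | ∃ fstar fhat : E → ℤ,
        IsFlow src tgt cap bdg fstar ∧
        (∀ f, IsFlow src tgt cap bdg f → flowCost c fstar ≤ flowCost c f) ∧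
        IsFlow src tgt cap bdg fhat ∧ fhat ≠ fstar ∧
        flowCost c fhat - flowCost c fstar ≤ ε} ≤
      ENNReal.ofReal (2 * ε * φ * (Fintype.card E)) := by
  classical
  set μ : E → Measure ℝ := fun e => (volume : Measure ℝ).withDensity (g e) with hμdef
  haveI : ∀ e, IsProbabilityMeasure (μ e) := hgprob
  have hEne : Nonempty E := by
    obtain ⟨f₁, f₂, _, _, hne⟩ := htwo
    by_contra hE
    exact hne (funext fun e => absurd ⟨e⟩ hE)
  have hEne' := hEne
  have hφ : 0 ≤ φ := by
    by_contra hneg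
    push_neg at hneg
    obtain ⟨e⟩ := hEne
    have h0 : g e = fun _ => 0 := by
      funext x
      have := hgbound e x
      rw [ENNReal.ofReal_eq_zero.mpr (le_of_lt hneg)] at this
      simpa using this
    have hpm := hgprob e
    rw [h0] at hpm
    have h1 := hpm.measure_univ
    rw [show (fun _ : ℝ => (0:ENNReal)) = (0 : ℝ → ENNReal) from rfl, withDensity_zero] at h1
    simp at h1
  have hμIcc : ∀ (e : E) (a b : ℝ), μ e (Set.Icc a b) ≤ ENNReal.ofReal φ * volume (Set.Icc a b) := by
    intro e a b
    rw [hμdef, withDensity_apply _ measurableSet_Icc]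
    calc ∫⁻ x in Set.Icc a b, g e x ∂volume
        ≤ ∫⁻ _ in Set.Icc a b, ENNReal.ofReal φ ∂volume :=
          setLIntegral_mono measurable_const (fun x _ => hgbound e x)
      _ = ENNReal.ofReal φ * volume (Set.Icc a b) := setLIntegral_const _ _
  -- the bad sets
  set A : E → ℤ → ℤ → Set (E → ℝ) := fun e k₀ k₁ =>
    {c | ∃ f g' : E → ℤ, IsFlow src tgt cap bdg f ∧ IsFlow src tgt cap bdg g' ∧
      (∀ h, IsFlow src tgt cap bdg h → flowCost c f ≤ flowCost c h) ∧
      f e = k₀ ∧ g' e = k₁ ∧ flowCost c g' - flowCost c f ≤ ε} with hA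
  have hcover : {c : E → ℝ | ∃ fstar fhat : E → ℤ,
        IsFlow src tgt cap bdg fstar ∧
        (∀ f, IsFlow src tgt cap bdg f → flowCost c fstar ≤ flowCost c f) ∧
        IsFlow src tgt cap bdg fhat ∧ fhat ≠ fstar ∧
        flowCost c fhat - flowCost c fstar ≤ ε} ⊆
      ⋃ e, (A e 0 1 ∪ A e (cap e : ℤ) ((cap e : ℤ) - 1)) := by
    intro c hc
    obtain ⟨e, k₀, k₁, hk, hcases, f, g', wit⟩ := covering c ε hε htwo hc
    refine Set.mem_iUnion.mpr ⟨e, ?_⟩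
    rcases hcases with ⟨rfl, rfl⟩ | ⟨rfl, rfl⟩
    · exact Or.inl ⟨f, g', wit⟩
    · exact Or.inr ⟨f, g', wit⟩
  -- bound for each bad set
  have hbound : ∀ (e : E) (k₀ k₁ : ℤ), (k₁ = k₀ + 1 ∨ k₁ = k₀ - 1) →
      Measure.pi μ (A e k₀ k₁) ≤ ENNReal.ofReal (φ * ε) := by
    intro e k₀ k₁ hk
    set F : Finset (E → ℤ) :=
      (Fintype.piFinset fun e => Finset.Icc 0 (cap e : ℤ)).filter (IsFlow src tgt cap bdg) with hF
    have hmemF : ∀ f, f ∈ F ↔ IsFlow src tgt cap bdg f := by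
      intro f
      simp only [hF, Finset.mem_filter, Fintype.mem_piFinset, Finset.mem_Icc]
      exact ⟨fun h => h.2, fun h => ⟨fun e => h.1 e, h⟩⟩
    set F₀ : Finset (E → ℤ) := F.filter (fun f => f e = k₀) with hF₀
    set F₁ : Finset (E → ℤ) := F.filter (fun f => f e = k₁) with hF₁
    by_cases hnon : F₀.Nonempty ∧ F₁.Nonempty
    · obtain ⟨h₀, h₁⟩ := hnon
      set rest : (E → ℝ) → (E → ℤ) → ℝ :=
        fun c f => ∑ e' ∈ Finset.univ.erase e, c e' * (f e' : ℝ) with hrest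
      have hrestmeas : ∀ f : E → ℤ, Measurable fun c : E → ℝ => rest c f := by
        intro f
        apply Finset.measurable_sum
        intro e' _
        exact (measurable_pi_apply e').mul_const _
      have hrestsplit : ∀ (c : E → ℝ) (f : E → ℤ),
          flowCost c f = rest c f + c e * (f e : ℝ) := by
        intro c f
        rw [flowCost, hrest]
        exact (Finset.sum_erase_add _ _ (Finset.mem_univ e)).symm
      have hrestind : ∀ (c c' : E → ℝ) (f : E → ℤ), (∀ i, i ≠ e → c i = c' i) →
          rest c f = rest c' f := by
        intro c c' f hcc
        refine Finset.sum_congr rfl fun e' he' => ?_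
        rw [hcc e' (Finset.ne_of_mem_erase he')]
      set A₀ : (E → ℝ) → ℝ := fun c => F₀.inf' h₀ (rest c) with hA₀
      set A₁ : (E → ℝ) → ℝ := fun c => F₁.inf' h₁ (rest c) with hA₁
      have hinfmeas : ∀ (s : Finset (E → ℤ)) (hs : s.Nonempty),
          Measurable fun c : E → ℝ => s.inf' hs (rest c) := by
        intro s hs
        induction hs using Finset.Nonempty.cons_induction with
        | singleton a => simpa using hrestmeas a
        | cons a s ha hs ih =>
          have : (fun c : E → ℝ => (Finset.cons a s ha).inf' (Finset.cons_nonempty ha) (rest c)) =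
              fun c => min (rest c a) (s.inf' hs (rest c)) := by
            funext c; rw [Finset.inf'_cons]
          rw [this]
          exact (hrestmeas a).min ih
      -- pointwise interval bound
      have hkey : ∀ c ∈ A e k₀ k₁,
          A₀ c + (k₀ : ℝ) * c e ≤ A₁ c + (k₁ : ℝ) * c e ∧
          A₁ c + (k₁ : ℝ) * c e ≤ A₀ c + (k₀ : ℝ) * c e + ε := by
        intro c hc
        obtain ⟨f, g', hf, hg', hopt, hfe, hg'e, hdiff⟩ := hc
        have hfF₀ : f ∈ F₀ := by
          rw [hF₀, Finset.mem_filter]; exact ⟨(hmemF f).2 hf, hfe⟩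
        have hg'F₁ : g' ∈ F₁ := by
          rw [hF₁, Finset.mem_filter]; exact ⟨(hmemF g').2 hg', hg'e⟩
        have hfrest : rest c f = A₀ c := by
          refine le_antisymm ?_ (Finset.inf'_le _ hfF₀)
          refine Finset.le_inf' _ _ fun b hb => ?_
          obtain ⟨hbF, hbe⟩ := Finset.mem_filter.mp hb
          have := hopt b ((hmemF b).1 hbF)
          rw [hrestsplit c f, hrestsplit c b, hfe, hbe] at this
          linarith
        have hg'rest : A₁ c ≤ rest c g' := Finset.inf'_le _ hg'F₁
        obtain ⟨b₁, hb₁mem, hb₁eq⟩ := Finset.exists_mem_eq_inf' h₁ (rest c)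
        obtain ⟨hb₁F, hb₁e⟩ := Finset.mem_filter.mp hb₁mem
        have hoptb₁ := hopt b₁ ((hmemF b₁).1 hb₁F)
        rw [hrestsplit c f, hrestsplit c b₁, hfe, hb₁e, hfrest] at hoptb₁
        constructor
        · rw [hA₁, ← hb₁eq] at *
          linarith
        · rw [hrestsplit c g', hrestsplit c f, hg'e, hfe, hfrest] at hdiff
          linarith
      rcases hk with rfl | rfl
      · -- k₁ = k₀ + 1
        refine pi_slab_bound μ φ ε hφ hε hμIcc e (fun c => A₀ c - A₁ c)
          ((hinfmeas F₀ h₀).sub (hinfmeas F₁ h₁)) ?_ _ ?_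
        · intro c c' hcc
          have h0 : A₀ c = A₀ c' :=
            Finset.inf'_congr h₀ rfl fun f _ => hrestind c c' f hcc
          have h1 : A₁ c = A₁ c' :=
            Finset.inf'_congr h₁ rfl fun f _ => hrestind c c' f hcc
          show A₀ c - A₁ c = A₀ c' - A₁ c'
          rw [h0, h1]
        · intro c hc
          obtain ⟨hlow, hhigh⟩ := hkey c hc
          push_cast at hlow hhigh
          rw [Set.mem_Icc]
          constructor
          · show A₀ c - A₁ c ≤ c e
            linarith
          · show c e ≤ A₀ c - A₁ c + ε
            linarith
      · -- k₁ = k₀ - 1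
        refine pi_slab_bound μ φ ε hφ hε hμIcc e (fun c => A₁ c - A₀ c - ε)
          (((hinfmeas F₁ h₁).sub (hinfmeas F₀ h₀)).sub measurable_const) ?_ _ ?_
        · intro c c' hcc
          have h0 : A₀ c = A₀ c' :=
            Finset.inf'_congr h₀ rfl fun f _ => hrestind c c' f hcc
          have h1 : A₁ c = A₁ c' :=
            Finset.inf'_congr h₁ rfl fun f _ => hrestind c c' f hcc
          show A₁ c - A₀ c - ε = A₁ c' - A₀ c' - ε
          rw [h0, h1]
        · intro c hc
          obtain ⟨hlow, hhigh⟩ := hkey c hc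
          push_cast at hlow hhigh
          rw [Set.mem_Icc]
          constructor
          · show A₁ c - A₀ c - ε ≤ c e
            linarith
          · show c e ≤ A₁ c - A₀ c - ε + ε
            linarith
    · -- one of the level sets is empty: A is empty
      have hempty : A e k₀ k₁ = ∅ := by
        rw [Set.eq_empty_iff_forall_notMem]
        intro c hc
        obtain ⟨f, g', hf, hg', hopt, hfe, hg'e, hdiff⟩ := hc
        apply hnon
        constructor
        · exact ⟨f, by rw [hF₀, Finset.mem_filter]; exact ⟨(hmemF f).2 hf, hfe⟩⟩
        · exact ⟨g', by rw [hF₁, Finset.mem_filter]; exact ⟨(hmemF g').2 hg', hg'e⟩⟩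
      rw [hempty]
      simp
  -- put everything together
  calc Measure.pi μ {c : E → ℝ | ∃ fstar fhat : E → ℤ,
        IsFlow src tgt cap bdg fstar ∧
        (∀ f, IsFlow src tgt cap bdg f → flowCost c fstar ≤ flowCost c f) ∧
        IsFlow src tgt cap bdg fhat ∧ fhat ≠ fstar ∧
        flowCost c fhat - flowCost c fstar ≤ ε}
      ≤ Measure.pi μ (⋃ e, (A e 0 1 ∪ A e (cap e : ℤ) ((cap e : ℤ) - 1))) :=
        measure_mono hcover
    _ ≤ ∑' (e : E), Measure.pi μ (A e 0 1 ∪ A e (cap e : ℤ) ((cap e : ℤ) - 1)) :=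
        measure_iUnion_le _
    _ = ∑ e : E, Measure.pi μ (A e 0 1 ∪ A e (cap e : ℤ) ((cap e : ℤ) - 1)) := tsum_fintype _
    _ ≤ ∑ e : E, (ENNReal.ofReal (φ * ε) + ENNReal.ofReal (φ * ε)) := by
        refine Finset.sum_le_sum fun e _ => ?_
        refine le_trans (measure_union_le _ _) ?_
        exact add_le_add (hbound e 0 1 (Or.inl (by ring)))
          (hbound e (cap e : ℤ) ((cap e : ℤ) - 1) (Or.inr rfl))
    _ = ENNReal.ofReal (2 * ε * φ * (Fintype.card E)) := by
        rw [Finset.sum_const, Finset.card_univ, nsmul_eq_mul]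
        rw [← ENNReal.ofReal_add (by positivity) (by positivity)]
        rw [← ENNReal.ofReal_natCast (Fintype.card E)]
        rw [← ENNReal.ofReal_mul (by positivity)]
        congr 1
        ring
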